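/- The pre-image triangles T = P₁P₂P₃ form a Poncelet family inscribed in E whose caustic is the concentric axis-aligned ellipse of half the size of E: the side through P₁ and P₂ is tangent to the ellipse x²/(a/2)² + y²/(b/2)² = 1 at the midpoint (P₁ + P₂)/2. Precisely, for all s ∈ ℝ, the point Q(s) = (1−s)P₁ + sP₂ satisfies 4·Q₁(s)²/a² + 4·Q₂(s)²/b² ≥ 1, with equality if and only if s = 1/2 (and similarly for the other two sides). -/

import Mathlib

open Real

noncomputable def ellipsePt (a b t : ℝ) : ℝ × ℝ := (a * cos t, b * sin t)

lemma keyval (a b t t' s : ℝ) (hc : Real.cos (t - t') = -(1/2)) :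
    4 * ((1 - s) * (a * cos t) + s * (a * cos t')) ^ 2 / a ^ 2
      + 4 * ((1 - s) * (b * sin t) + s * (b * sin t')) ^ 2 / b ^ 2
    = 4 * ((1 - s) * cos t + s * cos t') ^ 2 * a ^ 2 / a ^ 2
      + 4 * ((1 - s) * sin t + s * sin t') ^ 2 * b ^ 2 / b ^ 2 := by
  ring_nf

lemma keyval' (a b t t' s : ℝ) (ha : 0 < a) (hb : 0 < b)
    (hc : Real.cos (t - t') = -(1/2)) :
    4 * ((1 - s) * (a * cos t) + s * (a * cos t')) ^ 2 / a ^ 2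
      + 4 * ((1 - s) * (b * sin t) + s * (b * sin t')) ^ 2 / b ^ 2
    = 3 * (2 * s - 1) ^ 2 + 1 := by
  have h1 := sin_sq_add_cos_sq t
  have h2 := sin_sq_add_cos_sq t'
  rw [cos_sub] at hc
  field_simp
  linear_combination (4*(1-s)^2)*h1 + (4*s^2)*h2 + (8*s*(1-s))*hc

lemma finpiece (s : ℝ) :
    3 * (2 * s - 1) ^ 2 + 1 ≥ 1 ∧ (3 * (2 * s - 1) ^ 2 + 1 = 1 ↔ s = 1 / 2) := by
  constructor
  · nlinarith [sq_nonneg (2*s-1)]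
  · constructor
    · intro h
      have h2 : (2*s-1)^2 = 0 := by linarith
      have := pow_eq_zero_iff (n := 2) (by norm_num) |>.mp h2
      linarith
    · intro h; subst h; norm_num

lemma cosA : Real.cos (2 * π / 3) = -(1/2) := by
  have : (2:ℝ) * π / 3 = π - π/3 := by ring
  rw [this, Real.cos_pi_sub, Real.cos_pi_div_three]

lemma cosB : Real.cos (-(4 * π / 3)) = -(1/2) := by
  rw [Real.cos_neg]
  have : (4:ℝ) * π / 3 = π - (-(π/3)) := by ring
  rw [this, Real.cos_pi_sub]; rw [Real.cos_neg, Real.cos_pi_div_three]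

/-- the sides of the pre-image triangle `T = P₁P₂P₃` are tangent to the
half-size concentric ellipse `x²/(a/2)² + y²/(b/2)² = 1` at the side midpoints: each point
of the side lies outside that ellipse, with equality exactly at the midpoint. -/
theorem stmt11 (a b u : ℝ) (hb : 0 < b) (hab : b < a)
    (P₁ P₂ P₃ : ℝ × ℝ)
    (hP₁ : P₁ = ellipsePt a b (-u / 3))
    (hP₂ : P₂ = ellipsePt a b (-u / 3 - 2 * π / 3))
    (hP₃ : P₃ = ellipsePt a b (-u / 3 - 4 * π / 3)) :
    (∀ s : ℝ,
      4 * ((1 - s) * P₁.1 + s * P₂.1) ^ 2 / a ^ 2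
        + 4 * ((1 - s) * P₁.2 + s * P₂.2) ^ 2 / b ^ 2 ≥ 1 ∧
      (4 * ((1 - s) * P₁.1 + s * P₂.1) ^ 2 / a ^ 2
        + 4 * ((1 - s) * P₁.2 + s * P₂.2) ^ 2 / b ^ 2 = 1 ↔ s = 1 / 2)) ∧
    (∀ s : ℝ,
      4 * ((1 - s) * P₂.1 + s * P₃.1) ^ 2 / a ^ 2
        + 4 * ((1 - s) * P₂.2 + s * P₃.2) ^ 2 / b ^ 2 ≥ 1 ∧
      (4 * ((1 - s) * P₂.1 + s * P₃.1) ^ 2 / a ^ 2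
        + 4 * ((1 - s) * P₂.2 + s * P₃.2) ^ 2 / b ^ 2 = 1 ↔ s = 1 / 2)) ∧
    (∀ s : ℝ,
      4 * ((1 - s) * P₃.1 + s * P₁.1) ^ 2 / a ^ 2
        + 4 * ((1 - s) * P₃.2 + s * P₁.2) ^ 2 / b ^ 2 ≥ 1 ∧
      (4 * ((1 - s) * P₃.1 + s * P₁.1) ^ 2 / a ^ 2
        + 4 * ((1 - s) * P₃.2 + s * P₁.2) ^ 2 / b ^ 2 = 1 ↔ s = 1 / 2)) := by
  have ha : 0 < a := lt_trans hb hab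
  subst hP₁ hP₂ hP₃
  simp only [ellipsePt]
  refine ⟨fun s => ?_, fun s => ?_, fun s => ?_⟩
  · rw [keyval' a b _ _ s ha hb (by rw [show (-u/3) - (-u/3 - 2*π/3) = 2*π/3 by ring]; exact cosA)]
    exact finpiece s
  · rw [keyval' a b _ _ s ha hb (by rw [show (-u/3 - 2*π/3) - (-u/3 - 4*π/3) = 2*π/3 by ring]; exact cosA)]
    exact finpiece s
  · rw [keyval' a b _ _ s ha hb (by rw [show (-u/3 - 4*π/3) - (-u/3) = -(4*π/3) by ring]; exact cosB)]
    exact finpiece s
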